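/- Comparison estimate against a time-periodic profile (key estimate of Theorem 1.1): let j ∈ {1,2}, ε > 0, T > 0, γ₉ ≥ 0, K ≥ 0. Let A : [0,T)×ℝ×ℝ² → ℝ and C : [0,T)×ℝ×ℝ² → ℝ² be C¹, 1-periodic in their second argument θ, with A ≥ 0 on [0,T)×ℝ×closure(Ω), and let g : ℝ² → ℝ be continuous. Suppose S : [0,T)×ℝ×ℝ² → ℝ is C¹ in (t,θ) and C² in x on an open set containing [0,T)×ℝ×closure(Ω), is 1-periodic in θ, satisfies ∂S/∂θ − (1/ε^{j−1})∇·(A(t,θ,·)∇S(t,θ,·)) = (1/ε^{j−1})∇·C(t,θ,·) in Ω and ∂S/∂n + S = g on ∂Ω for all (t,θ), and satisfies (∫_Ω |∂S/∂t(t,θ,x)|² dx)^{1/2} ≤ γ₉ and (∫_Ω S(t,θ,x)² dx)^{1/2} ≤ K for all (t,θ). If z is a classical solution of ∂z/∂t − (1/εʲ)∇·(A(t,t/ε,·)∇z) = (1/εʲ)∇·C(t,t/ε,·) in (0,T)×Ω with z(0,·) = z₀ on Ω and ∂z/∂n + z = g on (0,T)×∂Ω, then for every t ∈ [0,T): (∫_Ω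 z(t,x)² dx)^{1/2} ≤ (∫_Ω (z₀(x) − S(0,0,x))² dx)^{1/2} + γ₉ T + K. -/

import Mathlib

open MeasureTheory Set Real
open scoped RealInnerProductSpace

noncomputable section

abbrev E2 : Type := EuclideanSpace ℝ (Fin 2)

/-- Divergence of a vector field on the plane. -/
def vdiv (F : E2 → E2) (x : E2) : ℝ := ∑ i, fderiv ℝ F x (EuclideanSpace.single i 1) i

/-- A nonempty bounded open set in the plane with `C¹` boundary described by a defining
function `Φ`. -/
structure C1Domain where
  Ω : Set E2
  Φ : E2 → ℝ
  nonempty : Ω.Nonempty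
  bounded : Bornology.IsBounded Ω
  isOpen : IsOpen Ω
  smoothΦ : ContDiff ℝ 1 Φ
  eq_dom : Ω = {x | Φ x < 0}
  eq_bd : frontier Ω = {x | Φ x = 0}
  grad_ne : ∀ x ∈ frontier Ω, gradient Φ x ≠ 0

/-- Outward unit normal. -/
def nml (D : C1Domain) (x : E2) : E2 := ‖gradient D.Φ x‖⁻¹ • gradient D.Φ x

/-- The divergence theorem holds on the domain. -/
def DivergenceThm (D : C1Domain) : Prop :=
  ∀ F : E2 → E2, (∃ U : Set E2, IsOpen U ∧ closure D.Ω ⊆ U ∧ ContDiffOn ℝ 1 F U) →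
    (∫ x in D.Ω, vdiv F x) = ∫ x in frontier D.Ω, ⟪F x, nml D x⟫ ∂μH[1]

/-- `z` is `C¹` in `t` and `C²` in `x` on an open set containing `[0,T) × closure Ω`. -/
def ClassicalReg (T : ℝ) (D : C1Domain) (z : ℝ → E2 → ℝ) : Prop :=
  ∃ U : Set (ℝ × E2), IsOpen U ∧ (Ico 0 T ×ˢ closure D.Ω) ⊆ U ∧
    ContDiffOn ℝ 1 (fun p : ℝ × E2 => z p.1 p.2) U ∧
    ∀ t : ℝ, ContDiffOn ℝ 2 (fun x => z t x) {x | (t, x) ∈ U}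

section AuxHelpers

open Bornology Metric

variable {α : Type*} [MeasurableSpace α] {μ : Measure α} {f g : α → ℝ}

lemma cs_integral (hf : MemLp f 2 μ) (hg : MemLp g 2 μ) :
    ∫ x, f x * g x ∂μ ≤ Real.sqrt (∫ x, f x ^ 2 ∂μ) * Real.sqrt (∫ x, g x ^ 2 ∂μ) := by
  set F := hf.toLp f
  set G := hg.toLp g
  have hinner : ∀ (u : α → ℝ) (hu : MemLp u 2 μ) (v : α → ℝ) (hv : MemLp v 2 μ),
      ⟪hu.toLp u, hv.toLp v⟫ = ∫ x, u x * v x ∂μ := by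
    intro u hu v hv
    rw [MeasureTheory.L2.inner_def]
    apply integral_congr_ae
    filter_upwards [hu.coeFn_toLp, hv.coeFn_toLp] with x hx hy
    simp [hx, hy, RCLike.inner_apply, conj_trivial, mul_comm]
  have hFnorm : ‖F‖ = Real.sqrt (∫ x, f x ^ 2 ∂μ) := by
    have h1 : ⟪F, F⟫ = ∫ x, f x ^ 2 ∂μ := by
      rw [hinner f hf f hf]; simp [sq]
    have h2 : ⟪F, F⟫ = ‖F‖ ^ 2 := real_inner_self_eq_norm_sq F
    rw [← h1, h2, Real.sqrt_sq (norm_nonneg _)]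
  have hGnorm : ‖G‖ = Real.sqrt (∫ x, g x ^ 2 ∂μ) := by
    have h1 : ⟪G, G⟫ = ∫ x, g x ^ 2 ∂μ := by
      rw [hinner g hg g hg]; simp [sq]
    have h2 : ⟪G, G⟫ = ‖G‖ ^ 2 := real_inner_self_eq_norm_sq G
    rw [← h1, h2, Real.sqrt_sq (norm_nonneg _)]
  calc ∫ x, f x * g x ∂μ = ⟪F, G⟫ := (hinner f hf g hg).symm
    _ ≤ ‖F‖ * ‖G‖ := real_inner_le_norm F G
    _ = _ := by rw [hFnorm, hGnorm]

lemma minkowski_integral (hf : MemLp f 2 μ) (hg : MemLp g 2 μ) :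
    Real.sqrt (∫ x, (f x + g x) ^ 2 ∂μ)
      ≤ Real.sqrt (∫ x, f x ^ 2 ∂μ) + Real.sqrt (∫ x, g x ^ 2 ∂μ) := by
  set a := Real.sqrt (∫ x, f x ^ 2 ∂μ) with ha
  set b := Real.sqrt (∫ x, g x ^ 2 ∂μ) with hb
  have ha0 : 0 ≤ a := Real.sqrt_nonneg _
  have hb0 : 0 ≤ b := Real.sqrt_nonneg _
  have hfsq : Integrable (fun x => f x ^ 2) μ := by
    simpa [sq] using hf.integrable_sq
  have hgsq : Integrable (fun x => g x ^ 2) μ := by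
    simpa [sq] using hg.integrable_sq
  have hfg : Integrable (fun x => f x * g x) μ := by
    have := MeasureTheory.L2.integrable_inner (𝕜 := ℝ) (hf.toLp f) (hg.toLp g)
    apply this.congr
    filter_upwards [hf.coeFn_toLp, hg.coeFn_toLp] with x hx hy
    simp [hx, hy, RCLike.inner_apply, conj_trivial, mul_comm]
  have hexp : ∫ x, (f x + g x) ^ 2 ∂μ
      = ∫ x, f x ^ 2 ∂μ + 2 * ∫ x, f x * g x ∂μ + ∫ x, g x ^ 2 ∂μ := by
    have : (fun x => (f x + g x) ^ 2)
        = fun x => f x ^ 2 + 2 * (f x * g x) + g x ^ 2 := by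
      funext x; ring
    rw [this, integral_add (by exact (hfsq.add (hfg.const_mul 2))) hgsq,
      integral_add hfsq (hfg.const_mul 2), integral_const_mul]
  have hfa : ∫ x, f x ^ 2 ∂μ = a ^ 2 := by
    rw [ha, Real.sq_sqrt (integral_nonneg fun x => sq_nonneg _)]
  have hgb : ∫ x, g x ^ 2 ∂μ = b ^ 2 := by
    rw [hb, Real.sq_sqrt (integral_nonneg fun x => sq_nonneg _)]
  have hcs := cs_integral hf hg
  have : ∫ x, (f x + g x) ^ 2 ∂μ ≤ (a + b) ^ 2 := by
    rw [hexp, hfa, hgb]; nlinarith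
  calc Real.sqrt (∫ x, (f x + g x) ^ 2 ∂μ) ≤ Real.sqrt ((a + b) ^ 2) :=
        Real.sqrt_le_sqrt this
    _ = a + b := Real.sqrt_sq (by positivity)

lemma inner_gradient (f : E2 → ℝ) (x v : E2) : ⟪gradient f x, v⟫ = fderiv ℝ f x v := by
  unfold gradient
  exact InnerProductSpace.toDual_symm_apply

lemma gradient_sub' {f g : E2 → ℝ} {x : E2} (hf : DifferentiableAt ℝ f x)
    (hg : DifferentiableAt ℝ g x) :
    gradient (fun y => f y - g y) x = gradient f x - gradient g x := by
  unfold gradient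
  rw [fderiv_fun_sub hf hg, map_sub]

lemma vdiv_congr_nhds {F G : E2 → E2} {x : E2} (h : F =ᶠ[nhds x] G) :
    vdiv F x = vdiv G x := by
  unfold vdiv
  rw [Filter.EventuallyEq.fderiv_eq h]

lemma vdiv_sub {F G : E2 → E2} {x : E2} (hF : DifferentiableAt ℝ F x)
    (hG : DifferentiableAt ℝ G x) :
    vdiv (fun y => F y - G y) x = vdiv F x - vdiv G x := by
  unfold vdiv
  rw [fderiv_fun_sub hF hG]
  simp [Finset.sum_sub_distrib]

lemma vdiv_smul {f : E2 → ℝ} {F : E2 → E2} {x : E2} (hf : DifferentiableAt ℝ f x)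
    (hF : DifferentiableAt ℝ F x) :
    vdiv (fun y => f y • F y) x = ⟪gradient f x, F x⟫ + f x * vdiv F x := by
  unfold vdiv
  rw [fderiv_fun_smul hf hF]
  simp only [ContinuousLinearMap.add_apply, ContinuousLinearMap.coe_smul',
    Pi.smul_apply, ContinuousLinearMap.smulRight_apply, Pi.add_apply,
    PiLp.add_apply, PiLp.smul_apply]
  rw [Finset.sum_add_distrib]
  rw [add_comm]
  congr 1
  · rw [real_inner_comm, PiLp.inner_apply]
    congr 1
    funext i
    have hgi : gradient f x i = (fderiv ℝ f x) (EuclideanSpace.single i 1) := by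
      have := inner_gradient f x (EuclideanSpace.single i 1)
      rw [EuclideanSpace.inner_single_right] at this
      simpa using this
    rw [hgi, smul_eq_mul, RCLike.inner_apply]
    simp [conj_trivial]
  · rw [Finset.mul_sum]
    simp [smul_eq_mul]

lemma contDiffOn_gradient {f : E2 → ℝ} {s : Set E2} (hs : IsOpen s)
    (hf : ContDiffOn ℝ 2 f s) : ContDiffOn ℝ 1 (fun x => gradient f x) s := by
  have h1 : ContDiffOn ℝ 1 (fderiv ℝ f) s := hf.fderiv_of_isOpen hs (by norm_num)
  have h2 : ContDiff ℝ 1 (fun L : E2 →L[ℝ] ℝ => (InnerProductSpace.toDual ℝ E2).symm L) :=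
    (InnerProductSpace.toDual ℝ E2).symm.contDiff
  exact h2.comp_contDiffOn h1

lemma continuousOn_vdiv {F : E2 → E2} {s : Set E2} (hs : IsOpen s)
    (hF : ContDiffOn ℝ 1 F s) : ContinuousOn (vdiv F) s := by
  have h1 : ContinuousOn (fderiv ℝ F) s := hF.continuousOn_fderiv_of_isOpen hs le_rfl
  unfold vdiv
  apply continuousOn_finset_sum
  intro i _
  have h2 : ContinuousOn (fun x => fderiv ℝ F x (EuclideanSpace.single i 1)) s :=
    h1.clm_apply continuousOn_const
  exact (EuclideanSpace.proj i).continuous.comp_continuousOn h2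

lemma finiteRestrict {Ω : Set E2} (hb : IsBounded Ω) :
    IsFiniteMeasure (volume.restrict Ω) := by
  constructor
  rw [Measure.restrict_apply_univ]
  exact hb.measure_lt_top

lemma integrableOn_of_contOn {Ω : Set E2} (hb : IsBounded Ω) {f : E2 → ℝ}
    (hf : ContinuousOn f (closure Ω)) : IntegrableOn f Ω volume := by
  have hK : IsCompact (closure Ω) := Metric.isCompact_of_isClosed_isBounded
    isClosed_closure hb.closure
  exact (hf.integrableOn_compact hK).mono_set subset_closure

lemma memLp_of_contOn {Ω : Set E2} (ho : IsOpen Ω) (hb : IsBounded Ω) {f : E2 → ℝ}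
    (hf : ContinuousOn f (closure Ω)) : MemLp f 2 (volume.restrict Ω) := by
  haveI := finiteRestrict hb
  have hK : IsCompact (closure Ω) := Metric.isCompact_of_isClosed_isBounded
    isClosed_closure hb.closure
  obtain ⟨M, hM⟩ := hK.exists_bound_of_continuousOn hf
  apply MemLp.of_bound ((hf.mono subset_closure).aestronglyMeasurable ho.measurableSet) M
  exact (ae_restrict_iff' ho.measurableSet).mpr
    (Filter.Eventually.of_forall fun x hx => hM x (subset_closure hx))

lemma sqrt_gronwall {y : ℝ → ℝ} {b γ : ℝ} (hb : 0 ≤ b) (hγ : 0 ≤ γ)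
    (hy0 : ∀ t ∈ Icc 0 b, 0 ≤ y t)
    (hcont : ContinuousOn y (Icc 0 b))
    (hder : ∀ t ∈ Ioo 0 b, ∃ y', HasDerivAt y y' t ∧ y' ≤ 2 * γ * Real.sqrt (y t)) :
    Real.sqrt (y b) ≤ Real.sqrt (y 0) + γ * b := by
  have key : ∀ δ : ℝ, 0 < δ → Real.sqrt (y b + δ) ≤ Real.sqrt (y 0 + δ) + γ * b := by
    intro δ hδ
    set φ : ℝ → ℝ := fun s => γ * s - Real.sqrt (y s + δ) with hφ
    have hder' : ∀ s ∈ Ioo 0 b, ∃ φ', HasDerivAt φ φ' s ∧ 0 ≤ φ' := by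
      intro s hs
      obtain ⟨y', hy', hle⟩ := hder s hs
      have hys : 0 ≤ y s := hy0 s (Ioo_subset_Icc_self hs)
      have hpos : 0 < y s + δ := by linarith
      have h1 : HasDerivAt (fun u => y u + δ) y' s := hy'.add_const δ
      have h2 : HasDerivAt (fun u => Real.sqrt (y u + δ))
          (y' / (2 * Real.sqrt (y s + δ))) s := h1.sqrt hpos.ne'
      refine ⟨γ - y' / (2 * Real.sqrt (y s + δ)), ?_, ?_⟩
      · have := ((hasDerivAt_id s).const_mul γ).fun_sub h2
        simpa using this
      have hsq : 0 < Real.sqrt (y s + δ) := Real.sqrt_pos.mpr hpos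
      have hmono : Real.sqrt (y s) ≤ Real.sqrt (y s + δ) :=
        Real.sqrt_le_sqrt (by linarith)
      have : y' ≤ 2 * γ * Real.sqrt (y s + δ) := by nlinarith
      rw [sub_nonneg, div_le_iff₀ (by positivity)]
      linarith
    have hφcont : ContinuousOn φ (Icc 0 b) := by
      apply ContinuousOn.sub (continuousOn_const.mul continuousOn_id)
      exact (hcont.add continuousOn_const).sqrt
    have hmono : MonotoneOn φ (Icc 0 b) := by
      apply monotoneOn_of_deriv_nonneg (convex_Icc 0 b) hφcont
      · intro s hs
        rw [interior_Icc] at hs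
        obtain ⟨φ', hφ', _⟩ := hder' s hs
        exact hφ'.differentiableAt.differentiableWithinAt
      · intro s hs
        rw [interior_Icc] at hs
        obtain ⟨φ', hφ', h0⟩ := hder' s hs
        rw [hφ'.deriv]; exact h0
    have := hmono (left_mem_Icc.mpr hb) (right_mem_Icc.mpr hb) hb
    simp only [hφ, mul_zero] at this
    linarith
  have h2 : ∀ η : ℝ, 0 < η → Real.sqrt (y b) ≤ Real.sqrt (y 0) + γ * b + η := by
    intro η hη
    have hk := key (η ^ 2) (by positivity)
    have h3 : Real.sqrt (y b) ≤ Real.sqrt (y b + η ^ 2) :=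
      Real.sqrt_le_sqrt (by nlinarith)
    have h4 : Real.sqrt (y 0 + η ^ 2) ≤ Real.sqrt (y 0) + η := by
      rw [show y 0 + η ^ 2 = y 0 + η * η by ring]
      have := Real.sqrt_le_sqrt (show y 0 + η * η ≤ (Real.sqrt (y 0) + η) ^ 2 by
        nlinarith [Real.sq_sqrt (hy0 0 (left_mem_Icc.mpr hb)), Real.sqrt_nonneg (y 0)])
      calc Real.sqrt (y 0 + η * η) ≤ Real.sqrt ((Real.sqrt (y 0) + η) ^ 2) := this
        _ = Real.sqrt (y 0) + η := Real.sqrt_sq (by positivity)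
    linarith
  exact le_of_forall_pos_le_add h2

lemma hasDerivAt_int_sq {Ω : Set E2} (hΩo : IsOpen Ω) (hΩb : IsBounded Ω)
    {U : Set (ℝ × E2)} (hU : IsOpen U)
    {u : ℝ → E2 → ℝ} (hu : ContDiffOn ℝ 1 (fun p : ℝ × E2 => u p.1 p.2) U)
    {t₀ : ℝ} (ht : ∀ x ∈ closure Ω, (t₀, x) ∈ U) :
    HasDerivAt (fun t => ∫ x in Ω, (u t x) ^ 2)
      (∫ x in Ω, 2 * u t₀ x * deriv (fun s => u s x) t₀) t₀ := by
  haveI := finiteRestrict hΩb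
  have hK : IsCompact (closure Ω) := Metric.isCompact_of_isClosed_isBounded
    isClosed_closure hΩb.closure
  have hsub : {t₀} ×ˢ closure Ω ⊆ U := by
    rintro ⟨t, x⟩ ⟨ht', hx⟩
    simp only [mem_singleton_iff] at ht'
    subst ht'; exact ht x hx
  obtain ⟨V, W, hVo, hWo, htV, hKW, hVWU⟩ :=
    generalized_tube_lemma isCompact_singleton hK hU hsub
  have ht₀V : t₀ ∈ V := htV rfl
  obtain ⟨δ, hδ, hballV⟩ := Metric.isOpen_iff.mp hVo t₀ ht₀V
  set ut : ℝ × E2 → ℝ := fun p => fderiv ℝ (fun q : ℝ × E2 => u q.1 q.2) p (1, 0) with hut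
  have hline : ∀ t x, HasDerivAt (fun s : ℝ => (s, x)) ((1 : ℝ), (0 : E2)) t := by
    intro t x
    exact (hasDerivAt_id t).prodMk (hasDerivAt_const t x)
  have hpd : ∀ p ∈ U, HasDerivAt (fun s => u s p.2) (ut p) p.1 := by
    rintro ⟨t, x⟩ hp
    have hdiff : DifferentiableAt ℝ (fun q : ℝ × E2 => u q.1 q.2) (t, x) :=
      (hu.contDiffAt (hU.mem_nhds hp)).differentiableAt one_ne_zero
    exact hdiff.hasFDerivAt.comp_hasDerivAt t (hline t x)
  have hpdsq : ∀ p ∈ U, HasDerivAt (fun s => (u s p.2) ^ 2) (2 * u p.1 p.2 * ut p) p.1 := by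
    intro p hp
    have := (hpd p hp).fun_pow 2
    simpa [mul_comm, mul_assoc, mul_left_comm] using this
  have hutc : ContinuousOn (fun p : ℝ × E2 => 2 * u p.1 p.2 * ut p) U := by
    apply ContinuousOn.mul (continuousOn_const.mul hu.continuousOn)
    exact (hu.continuousOn_fderiv_of_isOpen hU le_rfl).clm_apply continuousOn_const
  set Q : Set (ℝ × E2) := Metric.closedBall t₀ (δ / 2) ×ˢ closure Ω with hQ
  have hQc : IsCompact Q := (isCompact_closedBall t₀ (δ / 2)).prod hK
  have hQU : Q ⊆ U := by
    rintro ⟨t, x⟩ ⟨htq, hxq⟩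
    exact hVWU ⟨hballV (by simpa using lt_of_le_of_lt (mem_closedBall.mp htq) (by linarith)),
      hKW hxq⟩
  obtain ⟨M, hM⟩ := hQc.exists_bound_of_continuousOn (hutc.mono hQU)
  have main := hasDerivAt_integral_of_dominated_loc_of_deriv_le
    (μ := volume.restrict Ω)
    (F := fun t x => (u t x) ^ 2)
    (F' := fun t x => 2 * u t x * ut (t, x))
    (x₀ := t₀) (bound := fun _ => M)
    (Metric.ball_mem_nhds t₀ (half_pos hδ)) ?meas ?int ?meas' ?bnd ?bint ?diff
  case meas =>
    filter_upwards [Metric.ball_mem_nhds t₀ (half_pos hδ)] with t htb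
    have hcmp : ContinuousOn ((fun p : ℝ × E2 => u p.1 p.2) ∘ (fun x : E2 => (t, x))) Ω :=
      hu.continuousOn.comp (continuous_const.prodMk continuous_id).continuousOn
        (fun x hx => hQU ⟨Metric.ball_subset_closedBall htb, subset_closure hx⟩)
    exact (ContinuousOn.pow hcmp 2).aestronglyMeasurable hΩo.measurableSet
  case int =>
    have hcmp : ContinuousOn ((fun p : ℝ × E2 => u p.1 p.2) ∘ (fun x : E2 => (t₀, x)))
        (closure Ω) :=
      hu.continuousOn.comp (continuous_const.prodMk continuous_id).continuousOn
        (fun x hx => ht x hx)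
    exact (ContinuousOn.integrableOn_compact hK (ContinuousOn.pow hcmp 2)).mono_set
      subset_closure
  case meas' =>
    have hcmp : ContinuousOn ((fun p : ℝ × E2 => 2 * u p.1 p.2 * ut p) ∘
        (fun x : E2 => (t₀, x))) Ω :=
      (hutc.mono hQU).comp (continuous_const.prodMk continuous_id).continuousOn
        (fun x hx => ⟨Metric.mem_closedBall_self (by linarith), subset_closure hx⟩)
    exact hcmp.aestronglyMeasurable hΩo.measurableSet
  case bnd =>
    rw [ae_restrict_iff' hΩo.measurableSet]
    apply Filter.Eventually.of_forall
    intro x hx t htb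
    exact hM (t, x) ⟨Metric.ball_subset_closedBall htb, subset_closure hx⟩
  case bint => exact integrable_const M
  case diff =>
    rw [ae_restrict_iff' hΩo.measurableSet]
    apply Filter.Eventually.of_forall
    intro x hx t htb
    exact hpdsq (t, x) (hQU ⟨Metric.ball_subset_closedBall htb, subset_closure hx⟩)
  have hcongr : ∫ x in Ω, 2 * u t₀ x * ut (t₀, x)
      = ∫ x in Ω, 2 * u t₀ x * deriv (fun s => u s x) t₀ := by
    apply setIntegral_congr_fun hΩo.measurableSet
    intro x hx
    have := (hpd (t₀, x) (ht x (subset_closure hx))).deriv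
    simp only [this]
  rw [← hcongr]
  exact main.2

end AuxHelpers

/-- comparison estimate of the solution of the Robin problem against a
time-periodic profile `S` (the key estimate in the proof of Theorem 1.1). -/
theorem stmt1
    (D : C1Domain) (hdiv : DivergenceThm D)
    (j : ℕ) (hj : j = 1 ∨ j = 2)
    (ε T γ₉ K : ℝ) (hε : 0 < ε) (hT : 0 < T) (hγ₉ : 0 ≤ γ₉) (hK : 0 ≤ K)
    -- coefficients A(t,θ,x), C(t,θ,x): C¹ near [0,T)×ℝ×closure Ω, 1-periodic in θ,
    -- A ≥ 0 on [0,T)×ℝ×closure Ω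
    (A : ℝ → ℝ → E2 → ℝ) (C : ℝ → ℝ → E2 → E2)
    (UA : Set (ℝ × ℝ × E2)) (hUAopen : IsOpen UA)
    (hUAsub : Ico 0 T ×ˢ (univ : Set ℝ) ×ˢ closure D.Ω ⊆ UA)
    (hA : ContDiffOn ℝ 1 (fun p : ℝ × ℝ × E2 => A p.1 p.2.1 p.2.2) UA)
    (hC : ContDiffOn ℝ 1 (fun p : ℝ × ℝ × E2 => C p.1 p.2.1 p.2.2) UA)
    (hAper : ∀ t θ x, A t (θ + 1) x = A t θ x)
    (hCper : ∀ t θ x, C t (θ + 1) x = C t θ x)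
    (hApos : ∀ t ∈ Ico 0 T, ∀ θ : ℝ, ∀ x ∈ closure D.Ω, 0 ≤ A t θ x)
    (g : E2 → ℝ) (hg : Continuous g)
    (z₀ : E2 → ℝ)
    -- the profile S
    (𝒮 : ℝ → ℝ → E2 → ℝ)
    (hSreg : ∃ U : Set (ℝ × ℝ × E2), IsOpen U ∧
      (Ico 0 T ×ˢ (univ : Set ℝ) ×ˢ closure D.Ω) ⊆ U ∧
      ContDiffOn ℝ 1 (fun p : ℝ × ℝ × E2 => 𝒮 p.1 p.2.1 p.2.2) U ∧
      ∀ t θ : ℝ, ContDiffOn ℝ 2 (fun x => 𝒮 t θ x) {x | (t, θ, x) ∈ U})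
    (hSper : ∀ t θ x, 𝒮 t (θ + 1) x = 𝒮 t θ x)
    (hSpde : ∀ t ∈ Ico 0 T, ∀ θ : ℝ, ∀ x ∈ D.Ω,
      deriv (fun s => 𝒮 t s x) θ
          - (1 / ε ^ (j - 1)) * vdiv (fun y => A t θ y • gradient (𝒮 t θ) y) x
        = (1 / ε ^ (j - 1)) * vdiv (C t θ) x)
    (hSbc : ∀ t ∈ Ico 0 T, ∀ θ : ℝ, ∀ x ∈ frontier D.Ω,
      ⟪gradient (𝒮 t θ) x, nml D x⟫ + 𝒮 t θ x = g x)
    (hSdt : ∀ t ∈ Ico 0 T, ∀ θ : ℝ,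
      Real.sqrt (∫ x in D.Ω, (deriv (fun s => 𝒮 s θ x) t) ^ 2) ≤ γ₉)
    (hSL2 : ∀ t ∈ Ico 0 T, ∀ θ : ℝ,
      Real.sqrt (∫ x in D.Ω, (𝒮 t θ x) ^ 2) ≤ K)
    -- z : classical solution of the oscillating problem
    (z : ℝ → E2 → ℝ) (hzreg : ClassicalReg T D z)
    (hzpde : ∀ t ∈ Ioo 0 T, ∀ x ∈ D.Ω,
      deriv (fun s => z s x) t
          - (1 / ε ^ j) * vdiv (fun y => A t (t / ε) y • gradient (z t) y) x
        = (1 / ε ^ j) * vdiv (C t (t / ε)) x)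
    (hzinit : ∀ x ∈ D.Ω, z 0 x = z₀ x)
    (hzbc : ∀ t ∈ Ioo 0 T, ∀ x ∈ frontier D.Ω,
      ⟪gradient (z t) x, nml D x⟫ + z t x = g x) :
    ∀ t ∈ Ico 0 T,
      Real.sqrt (∫ x in D.Ω, (z t x) ^ 2)
        ≤ Real.sqrt (∫ x in D.Ω, (z₀ x - 𝒮 0 0 x) ^ 2) + γ₉ * T + K := by
  obtain ⟨Uz, hUzo, hUzsub, hzC1, hzC2⟩ := hzreg
  obtain ⟨US, hUSo, hUSsub, hSC1, hSC2⟩ := hSreg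
  have hKc : IsCompact (closure D.Ω) := Metric.isCompact_of_isClosed_isBounded
    isClosed_closure D.bounded.closure
  have hΩK : D.Ω ⊆ closure D.Ω := subset_closure
  have hfrK : frontier D.Ω ⊆ closure D.Ω := frontier_subset_closure
  have hεj : (0:ℝ) < ε ^ j := pow_pos hε j
  have hj1 : 1 ≤ j := by rcases hj with h | h <;> omega
  have hpow : (1:ℝ) / ε ^ j = (1 / ε) * (1 / ε ^ (j - 1)) := by
    have : j - 1 + 1 = j := by omega
    rw [← this, pow_succ]
    field_simp
    ring
    rw [Nat.add_sub_cancel_left]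
  -- the comparison function
  set w : ℝ → E2 → ℝ := fun t x => z t x - 𝒮 t (t / ε) x with hw
  set y : ℝ → ℝ := fun t => ∫ x in D.Ω, (w t x) ^ 2 with hy
  -- joint C¹ regularity of w
  set V : Set (ℝ × E2) := Uz ∩ (fun p : ℝ × E2 => (p.1, p.1 / ε, p.2)) ⁻¹' US with hV
  have hVo : IsOpen V := hUzo.inter (hUSo.preimage (by fun_prop))
  have hVsub : Ico 0 T ×ˢ closure D.Ω ⊆ V := by
    rintro ⟨t, x⟩ ⟨ht, hx⟩
    exact ⟨hUzsub ⟨ht, hx⟩, hUSsub ⟨ht, ⟨mem_univ _, hx⟩⟩⟩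
  have hwC1 : ContDiffOn ℝ 1 (fun p : ℝ × E2 => w p.1 p.2) V := by
    apply ContDiffOn.sub (hzC1.mono inter_subset_left)
    have hm : ContDiff ℝ 1 (fun p : ℝ × E2 => (p.1, p.1 / ε, p.2)) := by
      apply contDiff_fst.prodMk (ContDiff.prodMk _ contDiff_snd)
      exact contDiff_fst.div_const ε
    have hcmp : ContDiffOn ℝ 1 ((fun p : ℝ × ℝ × E2 => 𝒮 p.1 p.2.1 p.2.2) ∘
        (fun p : ℝ × E2 => (p.1, p.1 / ε, p.2)))
        ((fun p : ℝ × E2 => (p.1, p.1 / ε, p.2)) ⁻¹' US) :=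
      hSC1.comp hm.contDiffOn (fun p hp => hp)
    exact hcmp.mono inter_subset_right
  -- derivative of the energy
  have hyderiv : ∀ t ∈ Ico 0 T,
      HasDerivAt y (∫ x in D.Ω, 2 * w t x * deriv (fun s => w s x) t) t := by
    intro t ht
    exact hasDerivAt_int_sq D.isOpen D.bounded hVo hwC1 (fun x hx => hVsub ⟨ht, hx⟩)
  have hynonneg : ∀ t, 0 ≤ y t := fun t => setIntegral_nonneg D.isOpen.measurableSet
    (fun x _ => sq_nonneg _)
  -- the energy inequality
  have henergy : ∀ t ∈ Ioo 0 T,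
      (∫ x in D.Ω, 2 * w t x * deriv (fun s => w s x) t) ≤ 2 * γ₉ * Real.sqrt (y t) := by
    intro t ht
    have htI : t ∈ Ico 0 T := ⟨le_of_lt ht.1, ht.2⟩
    set Oz : Set E2 := {x | (t, x) ∈ Uz} with hOzdef
    set OS : Set E2 := {x | (t, t / ε, x) ∈ US} with hOSdef
    set OA : Set E2 := {x | (t, t / ε, x) ∈ UA} with hOAdef
    have hlx : Continuous (fun x : E2 => (t, x)) := continuous_const.prodMk continuous_id
    have hlx3 : Continuous (fun x : E2 => (t, t / ε, x)) :=
      continuous_const.prodMk (continuous_const.prodMk continuous_id)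
    have hOzo : IsOpen Oz := hUzo.preimage hlx
    have hOSo : IsOpen OS := hUSo.preimage hlx3
    have hOAo : IsOpen OA := hUAopen.preimage hlx3
    have hKOz : closure D.Ω ⊆ Oz := fun x hx => hUzsub ⟨htI, hx⟩
    have hKOS : closure D.Ω ⊆ OS := fun x hx => hUSsub ⟨htI, mem_univ _, hx⟩
    have hKOA : closure D.Ω ⊆ OA := fun x hx => hUAsub ⟨htI, mem_univ _, hx⟩
    set O : Set E2 := Oz ∩ OS ∩ OA with hOdef
    have hOo : IsOpen O := (hOzo.inter hOSo).inter hOAo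
    have hKO : closure D.Ω ⊆ O := fun x hx => ⟨⟨hKOz hx, hKOS hx⟩, hKOA hx⟩
    -- slice regularity
    have hzC2t : ContDiffOn ℝ 2 (fun x => z t x) Oz := hzC2 t
    have hSC2t : ContDiffOn ℝ 2 (fun x => 𝒮 t (t / ε) x) OS := hSC2 t (t / ε)
    have hwC2 : ContDiffOn ℝ 2 (w t) (Oz ∩ OS) :=
      (hzC2t.mono inter_subset_left).sub (hSC2t.mono inter_subset_right)
    have hAt : ContDiffOn ℝ 1 (fun x => A t (t / ε) x) OA := by
      have hcmp : ContDiffOn ℝ 1 ((fun p : ℝ × ℝ × E2 => A p.1 p.2.1 p.2.2) ∘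
          (fun x : E2 => (t, t / ε, x))) OA :=
        hA.comp ((contDiff_const.prodMk (contDiff_const.prodMk contDiff_id)).contDiffOn)
          (fun x hx => hx)
      exact hcmp
    have hgradw : ContDiffOn ℝ 1 (fun x => gradient (w t) x) (Oz ∩ OS) :=
      contDiffOn_gradient (hOzo.inter hOSo) hwC2
    have hgradz : ContDiffOn ℝ 1 (fun x => gradient (z t) x) Oz :=
      contDiffOn_gradient hOzo hzC2t
    have hgradS : ContDiffOn ℝ 1 (fun x => gradient (𝒮 t (t / ε)) x) OS :=
      contDiffOn_gradient hOSo hSC2t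
    have hgsub : ∀ x ∈ Oz ∩ OS, gradient (w t) x
        = gradient (z t) x - gradient (𝒮 t (t / ε)) x := by
      intro x hx
      exact gradient_sub'
        ((hzC2t.contDiffAt (hOzo.mem_nhds hx.1)).differentiableAt (by norm_num))
        ((hSC2t.contDiffAt (hOSo.mem_nhds hx.2)).differentiableAt (by norm_num))
    have hGw : ContDiffOn ℝ 1 (fun x => A t (t / ε) x • gradient (w t) x) O :=
      (hAt.mono inter_subset_right).smul (hgradw.mono inter_subset_left)
    have hGz : ContDiffOn ℝ 1 (fun x => A t (t / ε) x • gradient (z t) x)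
        (Oz ∩ OA) :=
      (hAt.mono inter_subset_right).smul (hgradz.mono inter_subset_left)
    have hGS : ContDiffOn ℝ 1 (fun x => A t (t / ε) x • gradient (𝒮 t (t / ε)) x)
        (OS ∩ OA) :=
      (hAt.mono inter_subset_right).smul (hgradS.mono inter_subset_left)
    -- time derivative of the profile composed with fixed θ = t/ε
    have hStderiv : ∀ x ∈ OS, HasDerivAt (fun s => 𝒮 s (t / ε) x)
        (fderiv ℝ (fun p : ℝ × ℝ × E2 => 𝒮 p.1 p.2.1 p.2.2) (t, t / ε, x)
          ((1:ℝ), (0:ℝ), (0:E2))) t := by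
      intro x hx
      have hdiff := (hSC1.contDiffAt (hUSo.mem_nhds hx)).differentiableAt one_ne_zero
      exact hdiff.hasFDerivAt.comp_hasDerivAt t
        ((hasDerivAt_id t).prodMk ((hasDerivAt_const t (t / ε)).prodMk (hasDerivAt_const t x)))
    have hutSc : ContinuousOn (fun x => fderiv ℝ
        (fun p : ℝ × ℝ × E2 => 𝒮 p.1 p.2.1 p.2.2) (t, t / ε, x)
        ((1:ℝ), (0:ℝ), (0:E2))) OS := by
      have h1 : ContinuousOn (fderiv ℝ (fun p : ℝ × ℝ × E2 => 𝒮 p.1 p.2.1 p.2.2)) US :=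
        hSC1.continuousOn_fderiv_of_isOpen hUSo le_rfl
      have h2 : ContinuousOn ((fderiv ℝ (fun p : ℝ × ℝ × E2 => 𝒮 p.1 p.2.1 p.2.2)) ∘
          (fun x : E2 => (t, t / ε, x))) OS := h1.comp hlx3.continuousOn (fun x hx => hx)
      exact h2.clm_apply continuousOn_const
    -- the PDE satisfied by w
    have hwpde : ∀ x ∈ D.Ω, deriv (fun s => w s x) t
        = (1 / ε ^ j) * vdiv (fun x' => A t (t / ε) x' • gradient (w t) x') x
          - fderiv ℝ (fun p : ℝ × ℝ × E2 => 𝒮 p.1 p.2.1 p.2.2) (t, t / ε, x)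
              ((1:ℝ), (0:ℝ), (0:E2)) := by
      intro x hx
      have hxK := hΩK hx
      have hxUS : (t, t / ε, x) ∈ US := hKOS hxK
      have hdiffS := (hSC1.contDiffAt (hUSo.mem_nhds hxUS)).differentiableAt one_ne_zero
      have hLf : HasFDerivAt (fun p : ℝ × ℝ × E2 => 𝒮 p.1 p.2.1 p.2.2)
          (fderiv ℝ (fun p : ℝ × ℝ × E2 => 𝒮 p.1 p.2.1 p.2.2) (t, t / ε, x))
          (t, t / ε, x) := hdiffS.hasFDerivAt
      set L := fderiv ℝ (fun p : ℝ × ℝ × E2 => 𝒮 p.1 p.2.1 p.2.2) (t, t / ε, x) with hLdef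
      have hzd : HasDerivAt (fun s => z s x)
          (fderiv ℝ (fun p : ℝ × E2 => z p.1 p.2) (t, x) ((1:ℝ), (0:E2))) t := by
        have hdiffz := (hzC1.contDiffAt (hUzo.mem_nhds (hKOz hxK))).differentiableAt one_ne_zero
        exact hdiffz.hasFDerivAt.comp_hasDerivAt t
          ((hasDerivAt_id t).prodMk (hasDerivAt_const t x))
      have hSθ : HasDerivAt (fun r => 𝒮 t r x) (L ((0:ℝ), (1:ℝ), (0:E2))) (t / ε) :=
        by have := hLf.comp_hasDerivAt (t / ε) ((hasDerivAt_const (t / ε) t).prodMk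
          ((hasDerivAt_id (t / ε)).prodMk (hasDerivAt_const (t / ε) x))); exact this
      have hSfull : HasDerivAt (fun s => 𝒮 s (s / ε) x)
          (L ((1:ℝ), (1 / ε : ℝ), (0:E2))) t :=
        by have := hLf.comp_hasDerivAt t ((hasDerivAt_id t).prodMk
          (((hasDerivAt_id t).div_const ε).prodMk (hasDerivAt_const t x))); exact this
      have hLdec : L ((1:ℝ), (1 / ε : ℝ), (0:E2))
          = L ((1:ℝ), (0:ℝ), (0:E2)) + (1 / ε) * L ((0:ℝ), (1:ℝ), (0:E2)) := by
        have hv : ((1:ℝ), (1 / ε : ℝ), (0:E2))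
            = ((1:ℝ), (0:ℝ), (0:E2)) + (1 / ε) • ((0:ℝ), (1:ℝ), (0:E2)) := by
          simp [Prod.ext_iff]
        rw [hv, map_add, _root_.map_smul, smul_eq_mul]
      have hwd : HasDerivAt (fun s => w s x)
          (fderiv ℝ (fun p : ℝ × E2 => z p.1 p.2) (t, x) ((1:ℝ), (0:E2))
            - (L ((1:ℝ), (0:ℝ), (0:E2)) + (1 / ε) * L ((0:ℝ), (1:ℝ), (0:E2)))) t := by
        have := hzd.sub (hLdec ▸ hSfull)
        exact this
      rw [hwd.deriv]
      -- identify vdiv of the difference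
      have hvdiv : vdiv (fun x' => A t (t / ε) x' • gradient (w t) x') x
          = vdiv (fun x' => A t (t / ε) x' • gradient (z t) x') x
            - vdiv (fun x' => A t (t / ε) x' • gradient (𝒮 t (t / ε)) x') x := by
        have hmem : Oz ∩ OS ∈ nhds x := (hOzo.inter hOSo).mem_nhds ⟨hKOz hxK, hKOS hxK⟩
        have hev : (fun x' => A t (t / ε) x' • gradient (w t) x')
            =ᶠ[nhds x] (fun x' => A t (t / ε) x' • gradient (z t) x'
              - A t (t / ε) x' • gradient (𝒮 t (t / ε)) x') := by
          filter_upwards [hmem] with y hy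
          rw [hgsub y hy, smul_sub]
        rw [vdiv_congr_nhds hev]
        exact vdiv_sub
          ((hGz.contDiffAt ((hOzo.inter hOAo).mem_nhds
            ⟨hKOz hxK, hKOA hxK⟩)).differentiableAt one_ne_zero)
          ((hGS.contDiffAt ((hOSo.inter hOAo).mem_nhds
            ⟨hKOS hxK, hKOA hxK⟩)).differentiableAt one_ne_zero)
      have hz_eq := hzpde t ht x hx
      rw [hzd.deriv] at hz_eq
      have hS_eq := hSpde t htI (t / ε) x hx
      rw [hSθ.deriv] at hS_eq
      rw [hvdiv]
      linear_combination hz_eq - (1 / ε) * hS_eq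
        + (vdiv (fun x' => A t (t / ε) x' • gradient (𝒮 t (t / ε)) x') x
          + vdiv (C t (t / ε)) x) * hpow
    -- integrands
    set f1 : E2 → ℝ := fun x => w t x *
      vdiv (fun x' => A t (t / ε) x' • gradient (w t) x') x with hf1def
    set f2 : E2 → ℝ := fun x => w t x *
      fderiv ℝ (fun p : ℝ × ℝ × E2 => 𝒮 p.1 p.2.1 p.2.2) (t, t / ε, x)
        ((1:ℝ), (0:ℝ), (0:E2)) with hf2def
    have hwcontO : ContinuousOn (w t) O := (hwC2.continuousOn).mono inter_subset_left
    have hf1c : ContinuousOn f1 O :=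
      hwcontO.mul (continuousOn_vdiv hOo hGw)
    have hf2c : ContinuousOn f2 O :=
      hwcontO.mul (hutSc.mono (inter_subset_left.trans inter_subset_right))
    have hf1i : IntegrableOn f1 D.Ω volume :=
      integrableOn_of_contOn D.bounded (hf1c.mono hKO)
    have hf2i : IntegrableOn f2 D.Ω volume :=
      integrableOn_of_contOn D.bounded (hf2c.mono hKO)
    -- rewrite the integral using the PDE
    have hIcongr : ∫ x in D.Ω, 2 * w t x * deriv (fun s => w s x) t
        = ∫ x in D.Ω, ((2 / ε ^ j) * f1 x - 2 * f2 x) := by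
      apply setIntegral_congr_fun D.isOpen.measurableSet
      intro x hx
      show 2 * w t x * deriv (fun s => w s x) t = 2 / ε ^ j * f1 x - 2 * f2 x
      rw [hwpde x hx]
      simp only [hf1def, hf2def]
      ring
    have hIsplit : ∫ x in D.Ω, ((2 / ε ^ j) * f1 x - 2 * f2 x)
        = (2 / ε ^ j) * (∫ x in D.Ω, f1 x) - 2 * (∫ x in D.Ω, f2 x) := by
      rw [integral_sub (hf1i.const_mul _) (hf2i.const_mul _),
        integral_const_mul, integral_const_mul]
    -- divergence theorem: ∫ f1 ≤ 0
    have hf1nonpos : (∫ x in D.Ω, f1 x) ≤ 0 := by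
      have hFC1 : ContDiffOn ℝ 1
          (fun x => w t x • (A t (t / ε) x • gradient (w t) x)) O :=
        (((hwC2.of_le one_le_two).mono inter_subset_left).smul hGw)
      have hdt := hdiv (fun x => w t x • (A t (t / ε) x • gradient (w t) x))
        ⟨O, hOo, hKO, hFC1⟩
      have hvF : ∀ x ∈ O, vdiv (fun x' => w t x' •
          (A t (t / ε) x' • gradient (w t) x')) x
          = A t (t / ε) x * ‖gradient (w t) x‖ ^ 2 + f1 x := by
        intro x hxO
        rw [vdiv_smul
          (((hwC2.of_le one_le_two).mono inter_subset_left).contDiffAt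
            (hOo.mem_nhds hxO) |>.differentiableAt one_ne_zero)
          ((hGw.contDiffAt (hOo.mem_nhds hxO)).differentiableAt one_ne_zero)]
        rw [real_inner_smul_right, real_inner_self_eq_norm_sq]
      have hLHS : ∫ x in D.Ω, vdiv (fun x' => w t x' •
          (A t (t / ε) x' • gradient (w t) x')) x
          = (∫ x in D.Ω, A t (t / ε) x * ‖gradient (w t) x‖ ^ 2)
            + ∫ x in D.Ω, f1 x := by
        rw [← integral_add ?ha hf1i]
        · apply setIntegral_congr_fun D.isOpen.measurableSet
          intro x hx
          exact hvF x (hKO (hΩK hx))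
        case ha =>
          apply integrableOn_of_contOn D.bounded
          apply ContinuousOn.mono _ hKO
          exact ((hAt.continuousOn).mono
              (inter_subset_right)).mul
            (((hgradw.continuousOn).mono inter_subset_left).norm.pow 2)
      have hInonneg : 0 ≤ ∫ x in D.Ω, A t (t / ε) x * ‖gradient (w t) x‖ ^ 2 := by
        apply setIntegral_nonneg D.isOpen.measurableSet
        intro x hx
        have := hApos t htI (t / ε) x (hΩK hx)
        positivity
      have hbd : (∫ x in frontier D.Ω, ⟪w t x • (A t (t / ε) x • gradient (w t) x),
          nml D x⟫ ∂μH[1]) ≤ 0 := by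
        apply setIntegral_nonpos isClosed_frontier.measurableSet
        intro x hx
        have hxK : x ∈ closure D.Ω := hfrK hx
        have h1 : ⟪gradient (w t) x, nml D x⟫ = - w t x := by
          rw [hgsub x ⟨hKOz hxK, hKOS hxK⟩, inner_sub_left]
          have hz1 := hzbc t ht x hx
          have hS1 := hSbc t htI (t / ε) x hx
          have hwx : w t x = z t x - 𝒮 t (t / ε) x := rfl
          rw [hwx]
          linarith
        rw [real_inner_smul_left, real_inner_smul_left, h1]
        have hA0 := hApos t htI (t / ε) x hxK
        nlinarith [mul_nonneg hA0 (sq_nonneg (w t x))]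
      rw [hLHS] at hdt
      linarith
    -- the source term: Cauchy-Schwarz
    have hterm2 : -(2 * (∫ x in D.Ω, f2 x)) ≤ 2 * γ₉ * Real.sqrt (y t) := by
      have hmw : MemLp (fun x => - w t x) 2 (volume.restrict D.Ω) :=
        (memLp_of_contOn D.isOpen D.bounded (hwC2.continuousOn.mono
          (fun x hx => ⟨hKOz hx, hKOS hx⟩))).neg
      have hmu : MemLp (fun x => fderiv ℝ
          (fun p : ℝ × ℝ × E2 => 𝒮 p.1 p.2.1 p.2.2) (t, t / ε, x)
          ((1:ℝ), (0:ℝ), (0:E2))) 2 (volume.restrict D.Ω) :=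
        memLp_of_contOn D.isOpen D.bounded (hutSc.mono hKOS)
      have hcs := cs_integral hmw hmu
      have hsq1 : ∫ x in D.Ω, (- w t x) ^ 2 = y t := by
        have h : ∀ x : E2, (- w t x) ^ 2 = w t x ^ 2 := fun x => neg_sq _
        simp only [h, hy]
      have hsq2 : Real.sqrt (∫ x in D.Ω, (fderiv ℝ
          (fun p : ℝ × ℝ × E2 => 𝒮 p.1 p.2.1 p.2.2) (t, t / ε, x)
          ((1:ℝ), (0:ℝ), (0:E2))) ^ 2) ≤ γ₉ := by
        have hcongr2 : ∫ x in D.Ω, (fderiv ℝ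
            (fun p : ℝ × ℝ × E2 => 𝒮 p.1 p.2.1 p.2.2) (t, t / ε, x)
            ((1:ℝ), (0:ℝ), (0:E2))) ^ 2
            = ∫ x in D.Ω, (deriv (fun s => 𝒮 s (t / ε) x) t) ^ 2 := by
          apply setIntegral_congr_fun D.isOpen.measurableSet
          intro x hx
          show (fderiv ℝ (fun p : ℝ × ℝ × E2 => 𝒮 p.1 p.2.1 p.2.2) (t, t / ε, x)
            ((1:ℝ), (0:ℝ), (0:E2))) ^ 2 = (deriv (fun s => 𝒮 s (t / ε) x) t) ^ 2
          rw [(hStderiv x (hKOS (hΩK hx))).deriv]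
        rw [hcongr2]
        exact hSdt t htI (t / ε)
      have hneg : ∫ x in D.Ω, (- w t x) * (fderiv ℝ
          (fun p : ℝ × ℝ × E2 => 𝒮 p.1 p.2.1 p.2.2) (t, t / ε, x)
          ((1:ℝ), (0:ℝ), (0:E2))) = - ∫ x in D.Ω, f2 x := by
        rw [← integral_neg]
        apply setIntegral_congr_fun D.isOpen.measurableSet
        intro x _
        show (- w t x) * (fderiv ℝ (fun p : ℝ × ℝ × E2 => 𝒮 p.1 p.2.1 p.2.2)
          (t, t / ε, x) ((1:ℝ), (0:ℝ), (0:E2))) = - f2 x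
        simp only [hf2def]
        ring
      rw [hneg, hsq1] at hcs
      have hfin : - ∫ x in D.Ω, f2 x ≤ Real.sqrt (y t) * γ₉ := by
        apply le_trans hcs
        exact mul_le_mul_of_nonneg_left hsq2 (Real.sqrt_nonneg _)
      linarith
    rw [hIcongr, hIsplit]
    have hc1 : (2 / ε ^ j) * (∫ x in D.Ω, f1 x) ≤ 0 :=
      mul_nonpos_of_nonneg_of_nonpos (by positivity) hf1nonpos
    linarith
  -- Grönwall
  intro t₀ ht₀
  have hyg : Real.sqrt (y t₀) ≤ Real.sqrt (y 0) + γ₉ * t₀ := by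
    apply sqrt_gronwall ht₀.1 hγ₉ (fun s _ => hynonneg s)
    · intro s hs
      exact ((hyderiv s ⟨hs.1, lt_of_le_of_lt hs.2 ht₀.2⟩).continuousAt).continuousWithinAt
    · intro s hs
      refine ⟨_, hyderiv s ⟨le_of_lt hs.1, lt_trans hs.2 ht₀.2⟩, ?_⟩
      exact henergy s ⟨hs.1, lt_trans hs.2 ht₀.2⟩
  have hy0 : y 0 = ∫ x in D.Ω, (z₀ x - 𝒮 0 0 x) ^ 2 := by
    apply setIntegral_congr_fun D.isOpen.measurableSet
    intro x hx
    simp only [hw, zero_div, hzinit x hx]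
  -- slice regularity at t₀ for the final Minkowski step
  have hwcont : ContinuousOn (w t₀) (closure D.Ω) := by
    have : ContinuousOn ((fun p : ℝ × E2 => w p.1 p.2) ∘ (fun x : E2 => (t₀, x)))
        (closure D.Ω) :=
      hwC1.continuousOn.comp (continuous_const.prodMk continuous_id).continuousOn
        (fun x hx => hVsub ⟨ht₀, hx⟩)
    exact this
  have hScont : ContinuousOn (fun x => 𝒮 t₀ (t₀ / ε) x) (closure D.Ω) := by
    have : ContinuousOn ((fun p : ℝ × ℝ × E2 => 𝒮 p.1 p.2.1 p.2.2) ∘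
        (fun x : E2 => (t₀, t₀ / ε, x))) (closure D.Ω) :=
      hSC1.continuousOn.comp
        (continuous_const.prodMk (continuous_const.prodMk continuous_id)).continuousOn
        (fun x hx => hUSsub ⟨ht₀, ⟨mem_univ _, hx⟩⟩)
    exact this
  have hfinal : Real.sqrt (∫ x in D.Ω, (z t₀ x) ^ 2)
      ≤ Real.sqrt (y t₀) + Real.sqrt (∫ x in D.Ω, (𝒮 t₀ (t₀ / ε) x) ^ 2) := by
    have hzeq : (fun x => (z t₀ x) ^ 2) = fun x => (w t₀ x + 𝒮 t₀ (t₀ / ε) x) ^ 2 := by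
      funext x; simp [hw]
    rw [hzeq]
    exact minkowski_integral (memLp_of_contOn D.isOpen D.bounded hwcont)
      (memLp_of_contOn D.isOpen D.bounded hScont)
  have hSK := hSL2 t₀ ht₀ (t₀ / ε)
  have hγT : γ₉ * t₀ ≤ γ₉ * T := by
    apply mul_le_mul_of_nonneg_left (le_of_lt ht₀.2) hγ₉
  calc Real.sqrt (∫ x in D.Ω, (z t₀ x) ^ 2)
      ≤ Real.sqrt (y t₀) + Real.sqrt (∫ x in D.Ω, (𝒮 t₀ (t₀ / ε) x) ^ 2) := hfinal
    _ ≤ (Real.sqrt (y 0) + γ₉ * t₀) + K := add_le_add hyg hSK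
    _ ≤ Real.sqrt (∫ x in D.Ω, (z₀ x - 𝒮 0 0 x) ^ 2) + γ₉ * T + K := by
        rw [hy0] at *
        linarith

end
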